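/- For every τ in the complex upper half-plane, the Jacobi theta functions satisfy the identity θ_3(τ)^4 = θ_4(τ)^4 + θ_2(τ)^4. -/

import Mathlib

open Complex

/-- Jacobi theta function `θ₂(τ) = ∑_{n ∈ ℤ} q₁^((n+1/2)²)` with `q₁ = exp(iπτ)`. -/
noncomputable def θ₂ (τ : ℂ) : ℂ :=
  ∑' n : ℤ, Complex.exp (Real.pi * I * τ * ((n : ℂ) + 1 / 2) ^ 2)

/-- Jacobi theta function `θ₃(τ) = ∑_{n ∈ ℤ} q₁^(n²)` with `q₁ = exp(iπτ)`. -/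
noncomputable def θ₃ (τ : ℂ) : ℂ :=
  ∑' n : ℤ, Complex.exp (Real.pi * I * τ * (n : ℂ) ^ 2)

/-- Jacobi theta function `θ₄(τ) = ∑_{n ∈ ℤ} (-1)ⁿ q₁^(n²)` with `q₁ = exp(iπτ)`. -/
noncomputable def θ₄ (τ : ℂ) : ℂ :=
  ∑' n : ℤ, (-1) ^ n * Complex.exp (Real.pi * I * τ * (n : ℂ) ^ 2)

namespace ThetaAux

open Function

variable {τ : ℂ}

/-- Generic shifted theta term. -/
noncomputable def T (τ c : ℂ) (n : ℤ) : ℂ :=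
  Complex.exp (Real.pi * I * τ * ((n : ℂ) + c) ^ 2)

lemma T_eq (τ c : ℂ) (n : ℤ) :
    T τ c n = Complex.exp (Real.pi * I * c ^ 2 * τ) * jacobiTheta₂_term n (c * τ) τ := by
  rw [T, jacobiTheta₂_term, ← Complex.exp_add]
  congr 1
  ring

lemma summable_norm_T (hτ : 0 < τ.im) (c : ℂ) : Summable fun n : ℤ => ‖T τ c n‖ := by
  simp only [T_eq, norm_mul]
  apply Summable.mul_left
  refine Summable.of_nonneg_of_le (fun n => norm_nonneg _) (fun n => ?_)
    (summable_pow_mul_jacobiTheta₂_term_bound |(c * τ).im| hτ 0)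
  simpa only [pow_zero, one_mul] using norm_jacobiTheta₂_term_le hτ le_rfl le_rfl n

lemma summable_norm_alt_T (hτ : 0 < τ.im) (c : ℂ) :
    Summable fun n : ℤ => ‖(-1 : ℂ) ^ n * T τ c n‖ := by
  have := summable_norm_T hτ c
  refine this.congr fun n => ?_
  rw [norm_mul, norm_zpow, norm_neg, norm_one, one_zpow, one_mul]

lemma neg_one_ne_zero' : (-1 : ℂ) ≠ 0 := by norm_num

/-- Main driver: a double sum supported on the range of an injection `e`, whose
composition with `e` splits as a product, factors as a product of two theta-type sums. -/
lemma driver {H : ℤ × ℤ → ℂ} {F G : ℤ → ℂ} (c : ℂ)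
    (hF : Summable fun n => ‖F n‖) (hG : Summable fun n => ‖G n‖)
    (e : ℤ × ℤ → ℤ × ℤ) (he : Function.Injective e)
    (hsupp : ∀ p, p ∉ Set.range e → H p = 0)
    (heq : ∀ a b : ℤ, H (e (a, b)) = c * (F a * G b)) :
    ∑' p : ℤ × ℤ, H p = c * ((∑' n, F n) * (∑' n, G n)) := by
  rw [tsum_mul_tsum_of_summable_norm hF hG, ← tsum_mul_left]
  rw [← he.tsum_eq (f := H) (fun p hp => by_contra fun hr => hp (hsupp p hr))]
  exact tsum_congr fun y => heq y.1 y.2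

lemma e1_inj : Function.Injective (fun p : ℤ × ℤ => (p.1 + p.2, p.1 - p.2)) := by
  intro p q h
  simp only [Prod.mk.injEq] at h
  exact Prod.ext (by omega) (by omega)

lemma e2_inj : Function.Injective (fun p : ℤ × ℤ => (p.1 + p.2 + 1, p.1 - p.2)) := by
  intro p q h
  simp only [Prod.mk.injEq] at h
  exact Prod.ext (by omega) (by omega)

lemma e3_inj : Function.Injective (fun p : ℤ × ℤ => (p.1 + p.2, p.1 - p.2 - 1)) := by
  intro p q h
  simp only [Prod.mk.injEq] at h
  exact Prod.ext (by omega) (by omega)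

lemma mem_range_e1 {p : ℤ × ℤ} (hp : Even (p.1 + p.2)) :
    p ∈ Set.range (fun p : ℤ × ℤ => (p.1 + p.2, p.1 - p.2)) := by
  obtain ⟨x, y⟩ := p
  obtain ⟨k, hk⟩ := hp
  simp only at hk
  exact ⟨(k, x - k), by simp only [Prod.mk.injEq]; omega⟩

lemma mem_range_e2 {p : ℤ × ℤ} (hp : Odd (p.1 + p.2)) :
    p ∈ Set.range (fun p : ℤ × ℤ => (p.1 + p.2 + 1, p.1 - p.2)) := by
  obtain ⟨x, y⟩ := p
  obtain ⟨k, hk⟩ := hp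
  simp only at hk
  exact ⟨(k, x - k - 1), by simp only [Prod.mk.injEq]; omega⟩

lemma mem_range_e3 {p : ℤ × ℤ} (hp : Odd (p.1 + p.2)) :
    p ∈ Set.range (fun p : ℤ × ℤ => (p.1 + p.2, p.1 - p.2 - 1)) := by
  obtain ⟨x, y⟩ := p
  obtain ⟨k, hk⟩ := hp
  simp only at hk
  exact ⟨(k + 1, x - k - 1), by simp only [Prod.mk.injEq]; omega⟩

lemma theta3_eq (τ : ℂ) : θ₃ τ = ∑' n : ℤ, T τ 0 n := by
  simp [θ₃, T]

lemma theta2_eq (τ : ℂ) : θ₂ τ = ∑' n : ℤ, T τ (1/2) n := by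
  simp [θ₂, T]

lemma theta4_eq (τ : ℂ) : θ₄ τ = ∑' n : ℤ, (-1 : ℂ) ^ n * T τ 0 n := by
  simp [θ₄, T]

lemma zpow_neg_one_mul (m n : ℤ) :
    (-1 : ℂ) ^ m * (-1 : ℂ) ^ n = (-1 : ℂ) ^ (m + n) :=
  (zpow_add₀ neg_one_ne_zero' m n).symm

/-- Identity (A): `θ₃(τ)² + θ₄(τ)² = 2 θ₃(2τ)²`. -/
lemma identA (hτ : 0 < τ.im) : θ₃ τ ^ 2 + θ₄ τ ^ 2 = 2 * θ₃ (2 * τ) ^ 2 := by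
  have hτ2 : 0 < (2 * τ).im := by simp [hτ]
  have h3 := summable_norm_T hτ (0 : ℂ)
  have h4 := summable_norm_alt_T hτ (0 : ℂ)
  have hg := summable_norm_T hτ2 (0 : ℂ)
  rw [theta3_eq, theta4_eq, theta3_eq, sq, sq, sq,
    tsum_mul_tsum_of_summable_norm h3 h3, tsum_mul_tsum_of_summable_norm h4 h4,
    ← Summable.tsum_add (summable_mul_of_summable_norm h3 h3)
      (summable_mul_of_summable_norm h4 h4)]
  refine driver 2 hg hg _ e1_inj (fun p hp => ?_) (fun a b => ?_)
  · have hodd : Odd (p.1 + p.2) := by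
      rcases Int.even_or_odd (p.1 + p.2) with h | h
      · exact absurd (mem_range_e1 h) hp
      · exact h
    have : ((-1 : ℂ) ^ p.1 * T τ 0 p.1) * ((-1 : ℂ) ^ p.2 * T τ 0 p.2)
        = -(T τ 0 p.1 * T τ 0 p.2) := by
      rw [mul_mul_mul_comm, zpow_neg_one_mul, hodd.neg_one_zpow]
      ring
    rw [this]; ring
  · have heven : Even ((a + b) + (a - b)) := ⟨a, by ring⟩
    have h1 : ((-1 : ℂ) ^ (a + b) * T τ 0 (a + b)) * ((-1 : ℂ) ^ (a - b) * T τ 0 (a - b))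
        = T τ 0 (a + b) * T τ 0 (a - b) := by
      rw [mul_mul_mul_comm, zpow_neg_one_mul, heven.neg_one_zpow, one_mul]
    have h2 : T τ 0 (a + b) * T τ 0 (a - b) = T (2 * τ) 0 a * T (2 * τ) 0 b := by
      simp only [T, ← Complex.exp_add]
      congr 1
      push_cast
      ring
    simp only [h1, h2]
    ring

/-- Identity (B): `θ₃(τ)² - θ₄(τ)² = 2 θ₂(2τ)²`. -/
lemma identB (hτ : 0 < τ.im) : θ₃ τ ^ 2 - θ₄ τ ^ 2 = 2 * θ₂ (2 * τ) ^ 2 := by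
  have hτ2 : 0 < (2 * τ).im := by simp [hτ]
  have h3 := summable_norm_T hτ (0 : ℂ)
  have h4 := summable_norm_alt_T hτ (0 : ℂ)
  have hh := summable_norm_T hτ2 (1/2 : ℂ)
  rw [theta3_eq, theta4_eq, theta2_eq, sq, sq, sq,
    tsum_mul_tsum_of_summable_norm h3 h3, tsum_mul_tsum_of_summable_norm h4 h4,
    ← (summable_mul_of_summable_norm h3 h3).tsum_sub
      (summable_mul_of_summable_norm h4 h4)]
  refine driver 2 hh hh _ e2_inj (fun p hp => ?_) (fun a b => ?_)
  · have heven : Even (p.1 + p.2) := by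
      rcases Int.even_or_odd (p.1 + p.2) with h | h
      · exact h
      · exact absurd (mem_range_e2 h) hp
    have : ((-1 : ℂ) ^ p.1 * T τ 0 p.1) * ((-1 : ℂ) ^ p.2 * T τ 0 p.2)
        = T τ 0 p.1 * T τ 0 p.2 := by
      rw [mul_mul_mul_comm, zpow_neg_one_mul, heven.neg_one_zpow, one_mul]
    rw [this]; ring
  · have hodd : Odd ((a + b + 1) + (a - b)) := ⟨a, by ring⟩
    have h1 : ((-1 : ℂ) ^ (a + b + 1) * T τ 0 (a + b + 1)) * ((-1 : ℂ) ^ (a - b) * T τ 0 (a - b))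
        = -(T τ 0 (a + b + 1) * T τ 0 (a - b)) := by
      rw [mul_mul_mul_comm, zpow_neg_one_mul, hodd.neg_one_zpow]
      ring
    have h2 : T τ 0 (a + b + 1) * T τ 0 (a - b)
        = T (2 * τ) (1/2) a * T (2 * τ) (1/2) b := by
      simp only [T, ← Complex.exp_add]
      congr 1
      push_cast
      ring
    simp only [h1, h2]
    ring

set_option maxHeartbeats 1000000 in
/-- Identity (C): `θ₂(τ)² = 2 θ₂(2τ) θ₃(2τ)`. -/
lemma identC (hτ : 0 < τ.im) : θ₂ τ ^ 2 = 2 * (θ₂ (2 * τ) * θ₃ (2 * τ)) := by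
  have hτ2 : 0 < (2 * τ).im := by simp [hτ]
  have h2n := summable_norm_T hτ (1/2 : ℂ)
  have h2a := summable_norm_alt_T hτ (1/2 : ℂ)
  have hh := summable_norm_T hτ2 (1/2 : ℂ)
  have hg := summable_norm_T hτ2 (0 : ℂ)
  have hP : Summable fun p : ℤ × ℤ => T τ (1/2) p.1 * T τ (1/2) p.2 :=
    summable_mul_of_summable_norm h2n h2n
  have hQ : Summable fun p : ℤ × ℤ =>
      ((-1 : ℂ) ^ p.1 * T τ (1/2) p.1) * ((-1 : ℂ) ^ p.2 * T τ (1/2) p.2) :=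
    summable_mul_of_summable_norm
      (f := fun n : ℤ => (-1 : ℂ) ^ n * T τ (1/2) n)
      (g := fun n : ℤ => (-1 : ℂ) ^ n * T τ (1/2) n) h2a h2a
  have key : ∀ p : ℤ × ℤ, T τ (1/2) p.1 * T τ (1/2) p.2 =
      (T τ (1/2) p.1 * T τ (1/2) p.2
        + ((-1 : ℂ) ^ p.1 * T τ (1/2) p.1) * ((-1 : ℂ) ^ p.2 * T τ (1/2) p.2)) / 2
      + (T τ (1/2) p.1 * T τ (1/2) p.2
        - ((-1 : ℂ) ^ p.1 * T τ (1/2) p.1) * ((-1 : ℂ) ^ p.2 * T τ (1/2) p.2)) / 2 := by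
    intro p; ring
  have step1 : θ₂ τ ^ 2 = ∑' p : ℤ × ℤ, T τ (1/2) p.1 * T τ (1/2) p.2 := by
    rw [theta2_eq, sq, tsum_mul_tsum_of_summable_norm h2n h2n]
  have step2 : (∑' p : ℤ × ℤ, T τ (1/2) p.1 * T τ (1/2) p.2)
      = (∑' p : ℤ × ℤ, (T τ (1/2) p.1 * T τ (1/2) p.2
          + ((-1 : ℂ) ^ p.1 * T τ (1/2) p.1) * ((-1 : ℂ) ^ p.2 * T τ (1/2) p.2)) / 2)
      + (∑' p : ℤ × ℤ, (T τ (1/2) p.1 * T τ (1/2) p.2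
          - ((-1 : ℂ) ^ p.1 * T τ (1/2) p.1) * ((-1 : ℂ) ^ p.2 * T τ (1/2) p.2)) / 2) := by
    rw [← Summable.tsum_add ((hP.add hQ).div_const 2) ((hP.sub hQ).div_const 2)]
    exact tsum_congr key
  rw [step1, step2]
  have hplus : (∑' p : ℤ × ℤ, (T τ (1/2) p.1 * T τ (1/2) p.2
        + ((-1 : ℂ) ^ p.1 * T τ (1/2) p.1) * ((-1 : ℂ) ^ p.2 * T τ (1/2) p.2)) / 2)
      = 1 * ((∑' n : ℤ, T (2 * τ) (1/2) n) * (∑' n : ℤ, T (2 * τ) 0 n)) := by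
    refine driver 1 hh hg _ e1_inj (fun p hp => ?_) (fun a b => ?_)
    · have hodd : Odd (p.1 + p.2) := by
        rcases Int.even_or_odd (p.1 + p.2) with h | h
        · exact absurd (mem_range_e1 h) hp
        · exact h
      have : ((-1 : ℂ) ^ p.1 * T τ (1/2) p.1) * ((-1 : ℂ) ^ p.2 * T τ (1/2) p.2)
          = -(T τ (1/2) p.1 * T τ (1/2) p.2) := by
        rw [mul_mul_mul_comm, zpow_neg_one_mul, hodd.neg_one_zpow]
        ring
      rw [this]; ring
    · have heven : Even ((a + b) + (a - b)) := ⟨a, by ring⟩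
      have h1 : ((-1 : ℂ) ^ (a + b) * T τ (1/2) (a + b)) * ((-1 : ℂ) ^ (a - b) * T τ (1/2) (a - b))
          = T τ (1/2) (a + b) * T τ (1/2) (a - b) := by
        rw [mul_mul_mul_comm, zpow_neg_one_mul, heven.neg_one_zpow, one_mul]
      have h2 : T τ (1/2) (a + b) * T τ (1/2) (a - b)
          = T (2 * τ) (1/2) a * T (2 * τ) 0 b := by
        simp only [T, ← Complex.exp_add]
        congr 1
        push_cast
        ring
      simp only [h1, h2]; ring
  have hminus : (∑' p : ℤ × ℤ, (T τ (1/2) p.1 * T τ (1/2) p.2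
        - ((-1 : ℂ) ^ p.1 * T τ (1/2) p.1) * ((-1 : ℂ) ^ p.2 * T τ (1/2) p.2)) / 2)
      = 1 * ((∑' n : ℤ, T (2 * τ) 0 n) * (∑' n : ℤ, T (2 * τ) (1/2) n)) := by
    refine driver 1 hg hh _ e3_inj (fun p hp => ?_) (fun a b => ?_)
    · have heven : Even (p.1 + p.2) := by
        rcases Int.even_or_odd (p.1 + p.2) with h | h
        · exact h
        · exact absurd (mem_range_e3 h) hp
      have : ((-1 : ℂ) ^ p.1 * T τ (1/2) p.1) * ((-1 : ℂ) ^ p.2 * T τ (1/2) p.2)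
          = T τ (1/2) p.1 * T τ (1/2) p.2 := by
        rw [mul_mul_mul_comm, zpow_neg_one_mul, heven.neg_one_zpow, one_mul]
      rw [this]; ring
    · have hodd : Odd ((a + b) + (a - b - 1)) := ⟨a - 1, by ring⟩
      have h1 : ((-1 : ℂ) ^ (a + b) * T τ (1/2) (a + b))
            * ((-1 : ℂ) ^ (a - b - 1) * T τ (1/2) (a - b - 1))
          = -(T τ (1/2) (a + b) * T τ (1/2) (a - b - 1)) := by
        rw [mul_mul_mul_comm, zpow_neg_one_mul, hodd.neg_one_zpow]
        ring
      have h2 : T τ (1/2) (a + b) * T τ (1/2) (a - b - 1)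
          = T (2 * τ) 0 a * T (2 * τ) (1/2) b := by
        simp only [T, ← Complex.exp_add]
        congr 1
        push_cast
        ring
      simp only [h1, h2]; ring
  rw [hplus, hminus, theta2_eq, theta3_eq]
  ring

end ThetaAux

/-- Jacobi's identity `θ₃⁴ = θ₄⁴ + θ₂⁴` on the upper half-plane. -/
theorem theta_fourth_power_identity (τ : ℂ) (hτ : 0 < τ.im) :
    θ₃ τ ^ 4 = θ₄ τ ^ 4 + θ₂ τ ^ 4 := by
  have hA := ThetaAux.identA hτ
  have hB := ThetaAux.identB hτ
  have hC := ThetaAux.identC hτ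
  linear_combination (θ₃ τ ^ 2 - θ₄ τ ^ 2) * hA + 2 * θ₃ (2 * τ) ^ 2 * hB
    - (θ₂ τ ^ 2 + 2 * (θ₂ (2 * τ) * θ₃ (2 * τ))) * hC
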